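/- Let g ∈ SL₂(ℝ), ε > 0, λ = ‖g‖, and let ĝ(θ) = (1/π)arctan(λ⁻² tan(πθ)). Then for x, x₀ ∈ [0,1] with |x − 1/2| ≥ ε and |x₀ − 1/2| ≥ ε (and x, x₀ on the same side of 1/2), one has ĝ(x) = ĝ(x₀) + ĝ'(x₀)(x − x₀) + O_ε((x − x₀)²/λ²). -/

import Mathlib

/-- The chart form of the action of `g ∈ SL₂(ℝ)` on `ℝP¹` in singular-vector
coordinates: `ĝ(θ) = (1/π) arctan(λ⁻² tan(πθ))`, where `λ = ‖g‖ ≥ 1`. -/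
noncomputable def ghat (lam : ℝ) (θ : ℝ) : ℝ :=
  (1 / Real.pi) * Real.arctan (lam⁻¹ ^ 2 * Real.tan (Real.pi * θ))


noncomputable def Fd (c θ : ℝ) : ℝ :=
  (c * (1 + Real.tan (Real.pi * θ) ^ 2)) / (1 + c ^ 2 * Real.tan (Real.pi * θ) ^ 2)

noncomputable def Fdd (c θ : ℝ) : ℝ :=
  2 * Real.pi * c * (1 - c ^ 2) * (Real.tan (Real.pi * θ) * (1 + Real.tan (Real.pi * θ) ^ 2)) /
    (1 + c ^ 2 * Real.tan (Real.pi * θ) ^ 2) ^ 2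

lemma hasDerivAt_tanpi {θ : ℝ} (h : Real.cos (Real.pi * θ) ≠ 0) :
    HasDerivAt (fun t => Real.tan (Real.pi * t)) (Real.pi * (1 + Real.tan (Real.pi * θ) ^ 2)) θ := by
  have h1 : HasDerivAt (fun t : ℝ => Real.pi * t) Real.pi θ := by
    simpa using (hasDerivAt_id θ).const_mul Real.pi
  have h2 := (Real.hasDerivAt_tan h).comp θ h1
  have key : 1 / Real.cos (Real.pi * θ) ^ 2 = 1 + Real.tan (Real.pi * θ) ^ 2 := by
    rw [← Real.inv_one_add_tan_sq h, one_div, inv_inv]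
  rw [key] at h2
  refine h2.congr_deriv ?_
  ring

lemma hasDerivAt_ghat {lam θ : ℝ} (h : Real.cos (Real.pi * θ) ≠ 0) :
    HasDerivAt (ghat lam) (Fd (lam⁻¹ ^ 2) θ) θ := by
  set c := lam⁻¹ ^ 2 with hc
  set u := Real.tan (Real.pi * θ) with hu
  have ht := hasDerivAt_tanpi h
  have h2 : HasDerivAt (fun t => c * Real.tan (Real.pi * t)) (c * (Real.pi * (1 + u ^ 2))) θ :=
    ht.const_mul c
  have h3 := (Real.hasDerivAt_arctan (c * u)).comp θ h2
  have h4 := h3.const_mul (1 / Real.pi)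
  have hπ := Real.pi_ne_zero
  have hd : (1 : ℝ) + (c * u) ^ 2 ≠ 0 := by positivity
  have heq : ghat lam = fun t => 1 / Real.pi * ((Real.arctan ∘ fun t => c * Real.tan (Real.pi * t)) t) := by
    funext t; rfl
  rw [heq]
  refine h4.congr_deriv ?_
  unfold Fd
  have hd2 : (1 : ℝ) + c ^ 2 * u ^ 2 ≠ 0 := by positivity
  field_simp
  ring

lemma hasDerivAt_Fd {c θ : ℝ} (h : Real.cos (Real.pi * θ) ≠ 0) :
    HasDerivAt (Fd c) (Fdd c θ) θ := by
  set u := Real.tan (Real.pi * θ) with hu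
  have ht := hasDerivAt_tanpi h
  have hnum : HasDerivAt (fun t => c * (1 + Real.tan (Real.pi * t) ^ 2))
      (c * (2 * u ^ 1 * (Real.pi * (1 + u ^ 2)))) θ := ((ht.pow 2).const_add 1).const_mul c
  have hden : HasDerivAt (fun t => 1 + c ^ 2 * Real.tan (Real.pi * t) ^ 2)
      (c ^ 2 * (2 * u ^ 1 * (Real.pi * (1 + u ^ 2)))) θ := ((ht.pow 2).const_mul (c ^ 2)).const_add 1
  have hd : (1 : ℝ) + c ^ 2 * u ^ 2 ≠ 0 := by positivity
  have h5 := hnum.div hden hd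
  refine h5.congr_deriv ?_
  unfold Fdd
  rw [div_eq_div_iff (by positivity) (by positivity)]
  ring

lemma Fdd_le {c T u : ℝ} (hc0 : 0 < c) (hc1 : c ≤ 1) (hT : 0 ≤ T) (hu : |u| ≤ T) :
    |2 * Real.pi * c * (1 - c ^ 2) * (u * (1 + u ^ 2)) / (1 + c ^ 2 * u ^ 2) ^ 2| ≤
      2 * Real.pi * T * (1 + T ^ 2) * c := by
  have hpi := Real.pi_pos
  have hu0 := abs_nonneg u
  have hu2 : u ^ 2 ≤ T ^ 2 := by nlinarith [sq_abs u]
  have hc2 : (0:ℝ) ≤ 1 - c ^ 2 := by nlinarith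
  have hd1 : (1:ℝ) ≤ (1 + c ^ 2 * u ^ 2) ^ 2 := by nlinarith [sq_nonneg (c * u), sq_nonneg (c*u*(c*u))]
  rw [abs_div, abs_of_nonneg (by positivity : (0:ℝ) ≤ (1 + c ^ 2 * u ^ 2) ^ 2)]
  have step1 : |2 * Real.pi * c * (1 - c ^ 2) * (u * (1 + u ^ 2))| / (1 + c ^ 2 * u ^ 2) ^ 2 ≤
      |2 * Real.pi * c * (1 - c ^ 2) * (u * (1 + u ^ 2))| :=
    div_le_self (abs_nonneg _) hd1
  refine step1.trans ?_
  rw [abs_mul, abs_mul, abs_of_nonneg (by positivity : (0:ℝ) ≤ 2 * Real.pi * c),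
    abs_of_nonneg hc2, abs_mul, abs_of_nonneg (by positivity : (0:ℝ) ≤ 1 + u ^ 2)]
  have hcube : |u| * u ^ 2 ≤ T * T ^ 2 :=
    mul_le_mul hu hu2 (sq_nonneg u) hT
  have hA : |u| * (1 + u ^ 2) ≤ T * (1 + T ^ 2) := by nlinarith
  have hB : (1 - c ^ 2) * (|u| * (1 + u ^ 2)) ≤ 1 * (T * (1 + T ^ 2)) :=
    mul_le_mul (by nlinarith) hA (by positivity) one_pos.le
  have hC := mul_le_mul_of_nonneg_left hB (by positivity : (0:ℝ) ≤ 2 * Real.pi * c)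
  nlinarith [hC]

lemma region_facts {δ t : ℝ} (hδ0 : 0 < δ) (hδ : δ ≤ 1/2)
    (ht : (0 ≤ t ∧ t ≤ 1/2 - δ) ∨ (1/2 + δ ≤ t ∧ t ≤ 1)) :
    Real.cos (Real.pi * t) ≠ 0 ∧
      |Real.tan (Real.pi * t)| ≤ Real.tan (Real.pi/2 - Real.pi*δ) := by
  have hpi := Real.pi_pos
  have hmemT : Real.pi/2 - Real.pi*δ ∈ Set.Ioo (-(Real.pi/2)) (Real.pi/2) :=
    ⟨by nlinarith, by nlinarith⟩
  rcases ht with ⟨h1, h2⟩ | ⟨h1, h2⟩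
  · have hmem : Real.pi * t ∈ Set.Ioo (-(Real.pi/2)) (Real.pi/2) :=
      ⟨by nlinarith, by nlinarith⟩
    refine ⟨(Real.cos_pos_of_mem_Ioo hmem).ne', ?_⟩
    rw [abs_of_nonneg (Real.tan_nonneg_of_nonneg_of_le_pi_div_two (by positivity) (by nlinarith))]
    exact Real.strictMonoOn_tan.monotoneOn hmem hmemT (by nlinarith)
  · have htan : Real.tan (Real.pi * t) = Real.tan (Real.pi * (t - 1)) := by
      rw [show Real.pi * (t - 1) = Real.pi * t - Real.pi by ring, Real.tan_sub_pi]
    have hmem : Real.pi * (t - 1) ∈ Set.Ioo (-(Real.pi/2)) (Real.pi/2) :=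
      ⟨by nlinarith, by nlinarith⟩
    have hcos : Real.cos (Real.pi * t) ≠ 0 := by
      have h3 : 0 < Real.cos (Real.pi * (t - 1)) := Real.cos_pos_of_mem_Ioo hmem
      have h4 : Real.cos (Real.pi * (t - 1)) = -Real.cos (Real.pi * t) := by
        rw [show Real.pi * (t - 1) = Real.pi * t - Real.pi by ring, Real.cos_sub_pi]
      intro h0; rw [h4, h0] at h3; simp at h3
    refine ⟨hcos, ?_⟩
    rw [htan, abs_of_nonpos
      (Real.tan_nonpos_of_nonpos_of_neg_pi_div_two_le (by nlinarith) (by nlinarith))]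
    have hmono := Real.strictMonoOn_tan.monotoneOn
      (⟨by nlinarith, by nlinarith⟩ : -(Real.pi/2 - Real.pi*δ) ∈ Set.Ioo (-(Real.pi/2)) (Real.pi/2))
      hmem (by nlinarith)
    rw [Real.tan_neg] at hmono
    linarith

/-- For every `ε > 0` there is `C = C(ε) > 0` such that for all `λ ≥ 1`
and `x, x₀ ∈ [0,1]` with `|x − 1/2| ≥ ε`, `|x₀ − 1/2| ≥ ε`, on the same side of `1/2`,
the first order approximation `ĝ(x) = ĝ(x₀) + ĝ'(x₀)(x − x₀) + O_ε((x−x₀)²/λ²)` holds. -/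
theorem ghat_first_order_approximation :
    ∀ ε > (0 : ℝ), ∃ C > (0 : ℝ), ∀ lam ≥ (1 : ℝ), ∀ x x₀ : ℝ,
      x ∈ Set.Icc (0 : ℝ) 1 → x₀ ∈ Set.Icc (0 : ℝ) 1 →
      ε ≤ |x - 1 / 2| → ε ≤ |x₀ - 1 / 2| →
      ((x ≤ 1 / 2 ∧ x₀ ≤ 1 / 2) ∨ (1 / 2 ≤ x ∧ 1 / 2 ≤ x₀)) →
      |ghat lam x - ghat lam x₀ - deriv (ghat lam) x₀ * (x - x₀)| ≤
        C * (x - x₀) ^ 2 / lam ^ 2 := by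
  intro ε hε
  set δ := min ε (1/2 : ℝ) with hδdef
  have hδ0 : 0 < δ := lt_min hε (by norm_num)
  have hδh : δ ≤ 1/2 := min_le_right _ _
  set T := Real.tan (Real.pi/2 - Real.pi*δ) with hTdef
  have hpi := Real.pi_pos
  have hT0 : 0 ≤ T :=
    Real.tan_nonneg_of_nonneg_of_le_pi_div_two (by nlinarith) (by nlinarith)
  have hM1 : 0 ≤ 2*Real.pi*T*(1+T^2) :=
    mul_nonneg (mul_nonneg (by positivity) hT0) (by positivity)
  refine ⟨2*Real.pi*T*(1+T^2) + 1, by linarith, ?_⟩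
  intro lam hlam x x₀ hx hx₀ hεx hεx₀ hside
  have hl0 : (0:ℝ) < lam := by linarith
  set c := lam⁻¹ ^ 2 with hcdef
  have hc0 : 0 < c := by positivity
  have hc1 : c ≤ 1 := by
    rw [hcdef, inv_pow]
    apply inv_le_one_of_one_le₀
    nlinarith
  have hM0 : 0 ≤ 2*Real.pi*T*(1+T^2)*c := mul_nonneg hM1 hc0.le
  set s : Set ℝ := Set.Icc (min x₀ x) (max x₀ x) with hsdef
  have hx₀s : x₀ ∈ s := ⟨min_le_left _ _, le_max_left _ _⟩
  have hxs : x ∈ s := ⟨min_le_right _ _, le_max_right _ _⟩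
  have hreg : ∀ t ∈ s, (0 ≤ t ∧ t ≤ 1/2 - δ) ∨ (1/2 + δ ≤ t ∧ t ≤ 1) := by
    intro t ht
    obtain ⟨ht1, ht2⟩ := ht
    rcases hside with ⟨hxh, hx₀h⟩ | ⟨hxh, hx₀h⟩
    · left
      have hax : x ≤ 1/2 - δ := by
        have h := le_trans (min_le_left ε (1/2:ℝ)) hεx
        rw [abs_of_nonpos (by linarith)] at h; linarith
      have hax₀ : x₀ ≤ 1/2 - δ := by
        have h := le_trans (min_le_left ε (1/2:ℝ)) hεx₀
        rw [abs_of_nonpos (by linarith)] at h; linarith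
      exact ⟨le_trans (le_min hx₀.1 hx.1) ht1, le_trans ht2 (max_le hax₀ hax)⟩
    · right
      have hax : 1/2 + δ ≤ x := by
        have h := le_trans (min_le_left ε (1/2:ℝ)) hεx
        rw [abs_of_nonneg (by linarith)] at h; linarith
      have hax₀ : 1/2 + δ ≤ x₀ := by
        have h := le_trans (min_le_left ε (1/2:ℝ)) hεx₀
        rw [abs_of_nonneg (by linarith)] at h; linarith
      exact ⟨le_trans (le_min hax₀ hax) ht1, le_trans ht2 (max_le hx₀.2 hx.2)⟩
  have hfacts : ∀ t ∈ s, Real.cos (Real.pi * t) ≠ 0 ∧ |Real.tan (Real.pi * t)| ≤ T :=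
    fun t ht => region_facts hδ0 hδh (hreg t ht)
  have hconv : Convex ℝ s := convex_Icc _ _
  have hbound : ∀ t ∈ s, ‖Fdd c t‖ ≤ 2*Real.pi*T*(1+T^2)*c := by
    intro t ht
    rw [Real.norm_eq_abs]
    exact Fdd_le hc0 hc1 hT0 (hfacts t ht).2
  have hderiv : ∀ t ∈ s, HasDerivWithinAt (Fd c) (Fdd c t) s t :=
    fun t ht => (hasDerivAt_Fd (hfacts t ht).1).hasDerivWithinAt
  have hdist : ∀ t ∈ s, |t - x₀| ≤ |x - x₀| := by
    intro t ht
    obtain ⟨h1, h2⟩ := ht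
    rw [abs_le]
    rcases le_total x₀ x with h | h
    · rw [min_eq_left h] at h1; rw [max_eq_right h] at h2
      rw [abs_of_nonneg (by linarith)]
      constructor <;> linarith
    · rw [min_eq_right h] at h1; rw [max_eq_left h] at h2
      rw [abs_of_nonpos (by linarith)]
      constructor <;> linarith
  have stepA : ∀ t ∈ s, ‖Fd c t - Fd c x₀‖ ≤ (2*Real.pi*T*(1+T^2)*c) * |x - x₀| := by
    intro t ht
    calc ‖Fd c t - Fd c x₀‖ ≤ (2*Real.pi*T*(1+T^2)*c) * ‖t - x₀‖ :=
          hconv.norm_image_sub_le_of_norm_hasDerivWithin_le hderiv hbound hx₀s ht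
      _ ≤ _ := by
          rw [Real.norm_eq_abs]
          exact mul_le_mul_of_nonneg_left (hdist t ht) hM0
  have hφderiv : ∀ t ∈ s,
      HasDerivWithinAt (fun t => ghat lam t - Fd c x₀ * t) (Fd c t - Fd c x₀) s t := by
    intro t ht
    have h1 := hasDerivAt_ghat (lam := lam) (hfacts t ht).1
    have h2 : HasDerivAt (fun t : ℝ => Fd c x₀ * t) (Fd c x₀) t := by
      simpa using (hasDerivAt_id t).const_mul (Fd c x₀)
    exact (h1.sub h2).hasDerivWithinAt
  have stepB := hconv.norm_image_sub_le_of_norm_hasDerivWithin_le hφderiv stepA hx₀s hxs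
  have hd0 : deriv (ghat lam) x₀ = Fd c x₀ := by
    rw [hcdef]; exact (hasDerivAt_ghat (hfacts x₀ hx₀s).1).deriv
  rw [Real.norm_eq_abs, Real.norm_eq_abs] at stepB
  have hrw : ghat lam x - Fd c x₀ * x - (ghat lam x₀ - Fd c x₀ * x₀)
      = ghat lam x - ghat lam x₀ - Fd c x₀ * (x - x₀) := by ring
  rw [hrw] at stepB
  rw [hd0]
  refine stepB.trans ?_
  have h1 : (2*Real.pi*T*(1+T^2)*c) * |x - x₀| * |x - x₀|
      = (2*Real.pi*T*(1+T^2)) * (x - x₀)^2 * c := by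
    rw [mul_assoc, abs_mul_abs_self]; ring
  rw [h1, hcdef, inv_pow]
  rw [show (2*Real.pi*T*(1+T^2)) * (x - x₀)^2 * (lam^2)⁻¹
      = (2*Real.pi*T*(1+T^2)) * (x - x₀)^2 / lam^2 by ring]
  gcongr
  linarith
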